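/- Local-to-global direction of the local-global principle: if P̂₀ is a global polyhedral solution to a polyhedral polynomial φ (i.e. the normal fan of P̂₀ contains the normal fan of M), then for every vertex v of M, the polyhedron S_v = P̂₀ ⊙ (N_M(v))* is a complete v-local solution to φ; moreover every vertex γ of S_v is a vertex of P̂₀ with N_{S_v}(γ) = N_{P̂₀}(γ) ∩ N_M(v), and consequently the orientation property (P) holds: whenever N_M(v) ∩ N_{P₀}(γ) is full-dimensional for a vertex γ of P₀ = CH(∪_v V(S_v)), γ is a vertex of S_v. -/

import Mathlib

open scoped Pointwise RealInnerProductSpace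

noncomputable section

abbrev Euc (n : ℕ) := EuclideanSpace ℝ (Fin n)

def omegaFun {n : ℕ} (ω : Fin n → ℝ) (x : Euc n) : ℝ := ∑ i, ω i * x i

def IsRatPolyhedron {n : ℕ} (P : Set (Euc n)) : Prop :=
  ∃ s : Finset ((Fin n → ℚ) × ℚ),
    P = {x : Euc n | ∀ p ∈ s, (∑ i, (p.1 i : ℝ) * x i) ≤ (p.2 : ℝ)}

def OmegaPositive {n : ℕ} (ω : Fin n → ℝ) (P : Set (Euc n)) : Prop :=
  BddBelow (omegaFun ω '' P)

def IsVertex {n : ℕ} (P : Set (Euc n)) (v : Euc n) : Prop :=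
  v ∈ P ∧ ∃ ℓ : Euc n, ∀ x ∈ P, ⟪ℓ, v⟫ ≤ ⟪ℓ, x⟫ ∧ (⟪ℓ, x⟫ = ⟪ℓ, v⟫ → x = v)

def normalCone {n : ℕ} (P : Set (Euc n)) (v : Euc n) : Set (Euc n) :=
  {ℓ | ∀ x ∈ P, ⟪ℓ, v⟫ ≤ ⟪ℓ, x⟫}

def dualCone {n : ℕ} (C : Set (Euc n)) : Set (Euc n) := {x | ∀ ℓ ∈ C, 0 ≤ ⟪ℓ, x⟫}

def mpow {n : ℕ} (P : Set (Euc n)) : ℕ → Set (Euc n)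
  | 0 => {0}
  | k + 1 => P + mpow P k

def polyEval {n : ℕ} (S : Finset ℕ) (Q : ℕ → Set (Euc n)) (P : Set (Euc n)) : Set (Euc n) :=
  closure (convexHull ℝ (⋃ i ∈ S, Q i + mpow P i))

def IsRoot {n : ℕ} (S : Finset ℕ) (Q : ℕ → Set (Euc n)) (P : Set (Euc n)) : Prop :=
  ∀ w, IsVertex (polyEval S Q P) w →
    ∃ i ∈ S, ∃ j ∈ S, i ≠ j ∧ IsVertex (Q i + mpow P i) w ∧ IsVertex (Q j + mpow P j) w

/-- The support (normal fan support) of a polyhedron: the union of the normal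
cones of its vertices. -/
def SuppFan {n : ℕ} (P : Set (Euc n)) : Set (Euc n) :=
  ⋃ v ∈ {x | IsVertex P x}, normalCone P v

/-- A complete v-local solution: a root whose support equals N_M(v). -/
def IsCompleteLocalSolution {n : ℕ} (S : Finset ℕ) (Q : ℕ → Set (Euc n))
    (M : Set (Euc n)) (v : Euc n) (P : Set (Euc n)) : Prop :=
  IsRoot S Q P ∧ SuppFan P = normalCone M v

/-- A global solution: a root whose normal fan contains that of M, i.e. each
normal cone of M is contained in the normal cone of some vertex of the root. -/
def IsGlobalSolution {n : ℕ} (S : Finset ℕ) (Q : ℕ → Set (Euc n))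
    (M : Set (Euc n)) (P : Set (Euc n)) : Prop :=
  IsRoot S Q P ∧ ∀ v, IsVertex M v → ∃ γ, IsVertex P γ ∧ normalCone M v ⊆ normalCone P γ

/-- The restriction S_v = P ⊙ (N_M(v))* of a global solution to the vertex v. -/
def locPart {n : ℕ} (P M : Set (Euc n)) (v : Euc n) : Set (Euc n) :=
  P + dualCone (normalCone M v)

namespace Stmt13
variable {n : ℕ}

lemma euc_inner_eq (a x : Euc n) : ⟪a, x⟫ = ∑ i, a i * x i := by
  rw [PiLp.inner_apply]; simp [RCLike.inner_apply, conj_trivial]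
  exact Finset.sum_congr rfl fun i _ => mul_comm _ _

example (p : (Fin n → ℚ) × ℚ) (x : Euc n) :
    ⟪((WithLp.equiv 2 (Fin n → ℝ)).symm fun i => (p.1 i : ℝ)), x⟫
      = ∑ i, (p.1 i : ℝ) * x i := by
  rw [euc_inner_eq]; rfl

example (s t : Set (Euc n)) (a : Euc n) : a ∈ s + t ↔ ∃ x ∈ s, ∃ y ∈ t, x + y = a := Set.mem_add

lemma zero_mem_dualCone (C : Set (Euc n)) : (0 : Euc n) ∈ dualCone C := by
  intro ℓ _; rw [inner_zero_right]

lemma smul_mem_dualCone {C : Set (Euc n)} {d : Euc n} (hd : d ∈ dualCone C) {t : ℝ}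
    (ht : 0 ≤ t) : t • d ∈ dualCone C := fun ℓ hℓ => by
  rw [real_inner_smul_right]; exact mul_nonneg ht (hd ℓ hℓ)

lemma add_mem_dualCone {C : Set (Euc n)} {d e : Euc n} (hd : d ∈ dualCone C)
    (he : e ∈ dualCone C) : d + e ∈ dualCone C := fun ℓ hℓ => by
  rw [inner_add_right]; exact add_nonneg (hd ℓ hℓ) (he ℓ hℓ)

lemma isClosed_dualCone (C : Set (Euc n)) : IsClosed (dualCone C) := by
  have h : dualCone C = ⋂ ℓ ∈ C, {x : Euc n | 0 ≤ ⟪ℓ, x⟫} := by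
    ext x; simp [dualCone]
  rw [h]
  exact isClosed_biInter fun ℓ _ =>
    isClosed_le continuous_const (continuous_const.inner continuous_id)

/-- The normal cone as a `ConvexCone`. -/
def ncCone (P : Set (Euc n)) (v : Euc n) : ConvexCone ℝ (Euc n) where
  carrier := normalCone P v
  smul_mem' c hc ℓ hℓ x hx := by
    rw [real_inner_smul_left, real_inner_smul_left]
    exact mul_le_mul_of_nonneg_left (hℓ x hx) hc.le
  add_mem' ℓ hℓ ℓ' hℓ' x hx := by
    rw [inner_add_left, inner_add_left]
    exact add_le_add (hℓ x hx) (hℓ' x hx)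

lemma zero_mem_normalCone (P : Set (Euc n)) (v : Euc n) : (0 : Euc n) ∈ normalCone P v :=
  fun x _ => by rw [inner_zero_left, inner_zero_left]

lemma isClosed_normalCone (P : Set (Euc n)) (v : Euc n) : IsClosed (normalCone P v) := by
  have h : normalCone P v = ⋂ x ∈ P, {ℓ : Euc n | ⟪ℓ, v⟫ ≤ ⟪ℓ, x⟫} := by
    ext ℓ; simp [normalCone]
  rw [h]
  exact isClosed_biInter fun x _ =>
    isClosed_le (continuous_id.inner continuous_const) (continuous_id.inner continuous_const)

lemma dual_dual_normalCone (P : Set (Euc n)) (v : Euc n) :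
    dualCone (dualCone (normalCone P v)) = normalCone P v := by
  have hD : ∀ C : Set (Euc n), dualCone C = (ProperCone.innerDual C : Set (Euc n)) :=
    fun C => by ext x; simp [dualCone]
  have hN : normalCone P v = (ProperCone.innerDual ((fun x => x - v) '' P) : Set (Euc n)) := by
    ext ℓ
    simp only [normalCone, Set.mem_setOf_eq, SetLike.mem_coe, ProperCone.mem_innerDual,
      Set.forall_mem_image, inner_sub_left, sub_nonneg, real_inner_comm ℓ]
    exact ⟨fun h x hx => by rw [inner_sub_right, sub_nonneg]; exact h x hx,
      fun h x hx => by have := h hx; rw [inner_sub_right, sub_nonneg] at this; exact this⟩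
  rw [hN, hD, hD, ProperCone.innerDual_innerDual]

lemma inner_nonneg_of_dual {C : Set (Euc n)} {ℓ d : Euc n} (hℓ : ℓ ∈ C) (hd : d ∈ dualCone C) :
    0 ≤ ⟪ℓ, d⟫ := hd ℓ hℓ


lemma mem_locPart_of_mem {P M : Set (Euc n)} {v p : Euc n} (hp : p ∈ P) :
    p ∈ locPart P M v :=
  Set.mem_add.mpr ⟨p, hp, 0, zero_mem_dualCone _, add_zero p⟩

lemma normalCone_locPart {P M : Set (Euc n)} {v : Euc n} (hne : P.Nonempty) (γ : Euc n) :
    normalCone (locPart P M v) γ = normalCone P γ ∩ normalCone M v := by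
  ext ℓ
  constructor
  · intro h
    have h1 : ℓ ∈ normalCone P γ := fun p hp => h p (mem_locPart_of_mem hp)
    obtain ⟨p₀, hp₀⟩ := hne
    have h2 : ∀ d ∈ dualCone (normalCone M v), 0 ≤ ⟪ℓ, d⟫ := by
      intro d hd
      by_contra hneg
      push_neg at hneg
      set t : ℝ := (⟪ℓ, p₀⟫ - ⟪ℓ, γ⟫ + 1) / (-⟪ℓ, d⟫) with ht
      have hnum : 0 < ⟪ℓ, p₀⟫ - ⟪ℓ, γ⟫ + 1 := by
        have := h1 p₀ hp₀; linarith
      have htpos : 0 < t := div_pos hnum (by linarith)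
      have hx : p₀ + t • d ∈ locPart P M v :=
        Set.mem_add.mpr ⟨p₀, hp₀, t • d, smul_mem_dualCone hd htpos.le, rfl⟩
      have := h _ hx
      rw [inner_add_right, real_inner_smul_right] at this
      have h4 : t * -⟪ℓ, d⟫ = ⟪ℓ, p₀⟫ - ⟪ℓ, γ⟫ + 1 :=
        div_mul_cancel₀ _ (by linarith)
      have h5 : t * ⟪ℓ, d⟫ = -(⟪ℓ, p₀⟫ - ⟪ℓ, γ⟫ + 1) := by rw [← h4]; ring
      rw [h5] at this; linarith
    have h3 : ℓ ∈ dualCone (dualCone (normalCone M v)) := by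
      intro d hd; rw [real_inner_comm]; exact h2 d hd
    rw [dual_dual_normalCone] at h3
    exact ⟨h1, h3⟩
  · rintro ⟨h1, h2⟩ x hx
    obtain ⟨p, hp, d, hd, rfl⟩ := Set.mem_add.mp hx
    have := inner_nonneg_of_dual h2 hd
    have := h1 p hp
    rw [inner_add_right]; linarith

lemma isVertex_of_isVertex_locPart {P M : Set (Euc n)} {v γ : Euc n}
    (h : IsVertex (locPart P M v) γ) : IsVertex P γ := by
  obtain ⟨hγ, ℓ, hℓ⟩ := h
  obtain ⟨p, hp, d, hd, hpd⟩ := Set.mem_add.mp hγ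
  have hγd : γ + d ∈ locPart P M v := by
    refine Set.mem_add.mpr ⟨p, hp, d + d, add_mem_dualCone hd hd, ?_⟩
    rw [← hpd]; abel
  have hd0 : 0 ≤ ⟪ℓ, d⟫ := by
    have := (hℓ _ hγd).1
    rw [inner_add_right] at this; linarith
  have hpmem : p ∈ locPart P M v := mem_locPart_of_mem hp
  have hpe : ⟪ℓ, p⟫ = ⟪ℓ, γ⟫ := by
    have h1 := (hℓ p hpmem).1
    have h2 : ⟪ℓ, γ⟫ = ⟪ℓ, p⟫ + ⟪ℓ, d⟫ := by rw [← inner_add_right, hpd]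
    linarith
  have hpγ : p = γ := (hℓ p hpmem).2 hpe
  subst hpγ
  exact ⟨hp, ℓ, fun x hx => hℓ x (mem_locPart_of_mem hx)⟩


lemma ratHalf_inner (p : (Fin n → ℚ) × ℚ) (x : Euc n) :
    ⟪((WithLp.equiv 2 (Fin n → ℝ)).symm fun i => (p.1 i : ℝ)), x⟫ = ∑ i, (p.1 i : ℝ) * x i := by
  rw [euc_inner_eq]; rfl

open Filter Topology in
lemma gap_of_strict {P : Set (Euc n)} (hP : IsRatPolyhedron P) {v ℓ : Euc n}
    (hv : v ∈ P)
    (hstrict : ∀ x ∈ P, ⟪ℓ, v⟫ ≤ ⟪ℓ, x⟫ ∧ (⟪ℓ, x⟫ = ⟪ℓ, v⟫ → x = v)) :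
    ∃ ε > 0, ∀ x ∈ P, ε * ‖x - v‖ ≤ ⟪ℓ, x - v⟫ := by
  classical
  by_contra hcon
  push_neg at hcon
  have hseq : ∀ k : ℕ, ∃ x ∈ P, ⟪ℓ, x - v⟫ < (1 / ((k : ℝ) + 1)) * ‖x - v‖ := by
    intro k
    obtain ⟨x, hx1, hx2⟩ := hcon (1 / ((k : ℝ) + 1)) (by positivity)
    exact ⟨x, hx1, hx2⟩
  choose x hxP hx using hseq
  have hxv : ∀ k, x k ≠ v := by
    intro k h
    have := hx k
    rw [h, sub_self, inner_zero_right, norm_zero, mul_zero] at this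
    exact lt_irrefl 0 this
  set u : ℕ → Euc n := fun k => ‖x k - v‖⁻¹ • (x k - v) with hu
  have hun : ∀ k, ‖u k‖ = 1 := fun k => norm_smul_inv_norm (sub_ne_zero.mpr (hxv k))
  have husph : ∀ k, u k ∈ Metric.sphere (0 : Euc n) 1 := fun k => by
    rw [mem_sphere_zero_iff_norm]; exact hun k
  obtain ⟨z, hzs, φ, hφ, hconv⟩ := (isCompact_sphere (0 : Euc n) 1).tendsto_subseq husph
  have hnorm_pos : ∀ k, 0 < ‖x k - v‖ := fun k => norm_sub_pos_iff.mpr (hxv k)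
  have hinner_nonneg : ∀ k, 0 ≤ ⟪ℓ, x k - v⟫ := fun k => by
    have := (hstrict _ (hxP k)).1
    rw [inner_sub_right]; linarith
  have hu_nonneg : ∀ k, 0 ≤ ⟪ℓ, u k⟫ := fun k => by
    rw [hu]; dsimp only
    rw [real_inner_smul_right]
    exact mul_nonneg (inv_nonneg.mpr (norm_nonneg _)) (hinner_nonneg k)
  have hu_lt : ∀ k, ⟪ℓ, u k⟫ < 1 / ((k : ℝ) + 1) := fun k => by
    rw [hu]; dsimp only
    rw [real_inner_smul_right, inv_mul_lt_iff₀ (hnorm_pos k)]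
    calc ⟪ℓ, x k - v⟫ < (1 / ((k : ℝ) + 1)) * ‖x k - v‖ := hx k
      _ = ‖x k - v‖ * (1 / ((k : ℝ) + 1)) := mul_comm _ _
  have hlimz : Tendsto (fun k => ⟪ℓ, u (φ k)⟫) atTop (𝓝 ⟪ℓ, z⟫) :=
    Tendsto.inner tendsto_const_nhds hconv
  have hsq : Tendsto (fun k => ⟪ℓ, u (φ k)⟫) atTop (𝓝 (0 : ℝ)) := by
    apply tendsto_of_tendsto_of_tendsto_of_le_of_le (tendsto_const_nhds)
      tendsto_one_div_add_atTop_nhds_zero_nat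
    · exact fun k => hu_nonneg (φ k)
    · intro k
      refine le_trans (hu_lt (φ k)).le ?_
      apply one_div_le_one_div_of_le (by positivity)
      have hk2 : k ≤ φ k := hφ.le_apply
      have : (k : ℝ) ≤ (φ k : ℝ) := Nat.cast_le.mpr hk2
      linarith
  have hzℓ : ⟪ℓ, z⟫ = 0 := tendsto_nhds_unique hlimz hsq
  obtain ⟨s, hPs⟩ := hP
  set a : (Fin n → ℚ) × ℚ → Euc n :=
    fun p => (WithLp.equiv 2 (Fin n → ℝ)).symm fun i => (p.1 i : ℝ) with ha
  have hAP : ∀ p (y : Euc n), ⟪a p, y⟫ = ∑ i, (p.1 i : ℝ) * y i := fun p y => ratHalf_inner p y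
  have hmemP : ∀ y : Euc n, y ∈ P ↔ ∀ p ∈ s, ⟪a p, y⟫ ≤ (p.2 : ℝ) := by
    intro y
    rw [hPs]
    simp only [Set.mem_setOf_eq, hAP]
  have hactive : ∀ p ∈ s, ⟪a p, v⟫ = (p.2 : ℝ) → ⟪a p, z⟫ ≤ 0 := by
    intro p hp hact
    have hk : ∀ k, ⟪a p, u (φ k)⟫ ≤ 0 := by
      intro k
      rw [hu]; dsimp only
      rw [real_inner_smul_right]
      have h1 : ⟪a p, x (φ k) - v⟫ ≤ 0 := by
        rw [inner_sub_right, hact]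
        have := (hmemP _).1 (hxP (φ k)) p hp
        linarith
      exact mul_nonpos_of_nonneg_of_nonpos (inv_nonneg.mpr (norm_nonneg _)) h1
    exact le_of_tendsto (Tendsto.inner tendsto_const_nhds hconv) (Eventually.of_forall hk)
  set g : (Fin n → ℚ) × ℚ → ℝ :=
    fun p => if 0 < ⟪a p, z⟫ then ((p.2 : ℝ) - ⟪a p, v⟫) / ⟪a p, z⟫ else 1 with hg
  set T : Finset ℝ := insert 1 (s.image g) with hT
  have hTne : T.Nonempty := ⟨1, Finset.mem_insert_self _ _⟩
  set t : ℝ := T.min' hTne with htdef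
  have ht_le : ∀ r ∈ T, t ≤ r := fun r hr => Finset.min'_le T r hr
  have hallpos : ∀ r ∈ T, 0 < r := by
    intro r hr
    rcases Finset.mem_insert.mp hr with h | h
    · rw [h]; norm_num
    · obtain ⟨p, hp, rfl⟩ := Finset.mem_image.mp h
      rw [hg]; dsimp only
      split_ifs with hcase
      · apply div_pos _ hcase
        have hle := (hmemP v).1 hv p hp
        rcases eq_or_lt_of_le hle with he | hlt
        · exact absurd (hactive p hp he) (not_le.mpr hcase)
        · linarith
      · norm_num
  have htpos : 0 < t := hallpos t (Finset.min'_mem T hTne)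
  have hmem : v + t • z ∈ P := by
    rw [hmemP]
    intro p hp
    rw [inner_add_right, real_inner_smul_right]
    by_cases hcase : 0 < ⟪a p, z⟫
    · have hgT : g p ∈ T := Finset.mem_insert_of_mem (Finset.mem_image_of_mem g hp)
      have h1 : t ≤ ((p.2 : ℝ) - ⟪a p, v⟫) / ⟪a p, z⟫ := by
        have := ht_le _ hgT
        rw [hg] at this; dsimp only at this; rw [if_pos hcase] at this
        exact this
      have h2 := (le_div_iff₀ hcase).mp h1
      linarith
    · push_neg at hcase
      have h3 := (hmemP v).1 hv p hp
      have h4 : t * ⟪a p, z⟫ ≤ 0 := mul_nonpos_of_nonneg_of_nonpos htpos.le hcase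
      linarith
  have h2 : ⟪ℓ, v + t • z⟫ = ⟪ℓ, v⟫ := by
    rw [inner_add_right, real_inner_smul_right, hzℓ]; ring
  have h3 := (hstrict _ hmem).2 h2
  have h4 : t • z = 0 := add_eq_left.mp h3
  have hz0 : z = 0 := by
    rcases smul_eq_zero.mp h4 with h | h
    · exact absurd h (ne_of_gt htpos)
    · exact h
  have hzn : ‖z‖ = 1 := mem_sphere_zero_iff_norm.mp hzs
  rw [hz0, norm_zero] at hzn
  norm_num at hzn


lemma exists_ball_normalCone {S : Finset ℕ} {Q : ℕ → Set (Euc n)}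
    (hQ : ∀ i ∈ S, IsRatPolyhedron (Q i)) {M : Set (Euc n)} (hM : M = ∑ i ∈ S, Q i)
    {v : Euc n} (hv : IsVertex M v) :
    ∃ ℓ₀ δ, 0 < δ ∧ ∀ ℓ' : Euc n, ‖ℓ' - ℓ₀‖ < δ → ℓ' ∈ normalCone M v := by
  classical
  obtain ⟨hvM, ℓ, hℓ⟩ := hv
  have hvM' := hvM
  rw [hM] at hvM'
  obtain ⟨g, hg, hgsum⟩ := (Set.mem_finset_sum S Q v).mp hvM'
  have hstrict : ∀ i ∈ S, ∀ x ∈ Q i, ⟪ℓ, g i⟫ ≤ ⟪ℓ, x⟫ ∧ (⟪ℓ, x⟫ = ⟪ℓ, g i⟫ → x = g i) := by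
    intro i hi x hxQ
    set y : Euc n := x + (v - g i) with hy
    have hymem : y ∈ M := by
      rw [hM]
      refine (Set.mem_finset_sum S Q y).mpr ⟨Function.update g i x, fun {j} hj => ?_, ?_⟩
      · by_cases hji : j = i
        · subst hji; rw [Function.update_self]; exact hxQ
        · rw [Function.update_of_ne hji]; exact hg hj
      · rw [Finset.sum_update_of_mem hi, Finset.sdiff_singleton_eq_erase]
        have h1 : g i + ∑ j ∈ S.erase i, g j = ∑ j ∈ S, g j := Finset.add_sum_erase S g hi
        rw [hgsum] at h1
        have h2 : ∑ j ∈ S.erase i, g j = v - g i := by rw [← h1]; abel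
        rw [h2, hy]
    have h2 := hℓ y hymem
    have hyin : ⟪ℓ, y⟫ = ⟪ℓ, x⟫ + (⟪ℓ, v⟫ - ⟪ℓ, g i⟫) := by
      rw [hy, inner_add_right, inner_sub_right]
    constructor
    · have := h2.1; rw [hyin] at this; linarith
    · intro he
      have h3 : ⟪ℓ, y⟫ = ⟪ℓ, v⟫ := by rw [hyin, he]; ring
      have h4 := h2.2 h3
      rw [hy] at h4
      have h5 : x - g i = x + (v - g i) - v := by abel
      rw [h4, sub_self] at h5
      exact sub_eq_zero.mp h5
  have hgap : ∀ i ∈ S, ∃ ε, 0 < ε ∧ ∀ x ∈ Q i, ε * ‖x - g i‖ ≤ ⟪ℓ, x - g i⟫ := by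
    intro i hi
    obtain ⟨ε, hε1, hε2⟩ := gap_of_strict (hQ i hi) (hg hi) (hstrict i hi)
    exact ⟨ε, hε1, hε2⟩
  choose! ε hε1 hε2 using hgap
  set T : Finset ℝ := insert 1 (S.image ε) with hT
  have hTne : T.Nonempty := ⟨1, Finset.mem_insert_self _ _⟩
  set δ : ℝ := T.min' hTne with hδdef
  have hδ_le : ∀ i ∈ S, δ ≤ ε i := fun i hi =>
    Finset.min'_le T _ (Finset.mem_insert_of_mem (Finset.mem_image_of_mem ε hi))
  have hδpos : 0 < δ := by
    have : ∀ r ∈ T, 0 < r := by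
      intro r hr
      rcases Finset.mem_insert.mp hr with h | h
      · rw [h]; norm_num
      · obtain ⟨i, hi, rfl⟩ := Finset.mem_image.mp h
        exact hε1 i hi
    exact this δ (Finset.min'_mem T hTne)
  refine ⟨ℓ, δ, hδpos, ?_⟩
  intro ℓ' hℓ' x hxM
  have hxM' := hxM
  rw [hM] at hxM'
  obtain ⟨f, hf, hfsum⟩ := (Set.mem_finset_sum S Q x).mp hxM'
  have hxv : x - v = ∑ i ∈ S, (f i - g i) := by
    rw [Finset.sum_sub_distrib, hfsum, hgsum]
  have h1 : δ * ‖x - v‖ ≤ ∑ i ∈ S, ⟪ℓ, f i - g i⟫ := by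
    have hA : ‖x - v‖ ≤ ∑ i ∈ S, ‖f i - g i‖ := by
      rw [hxv]; exact norm_sum_le S _
    have hB : ∀ i ∈ S, δ * ‖f i - g i‖ ≤ ⟪ℓ, f i - g i⟫ := by
      intro i hi
      refine le_trans ?_ (hε2 i hi (f i) (hf hi))
      exact mul_le_mul_of_nonneg_right (hδ_le i hi) (norm_nonneg _)
    calc δ * ‖x - v‖ ≤ δ * ∑ i ∈ S, ‖f i - g i‖ := by
          exact mul_le_mul_of_nonneg_left hA hδpos.le
      _ = ∑ i ∈ S, δ * ‖f i - g i‖ := Finset.mul_sum _ _ _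
      _ ≤ ∑ i ∈ S, ⟪ℓ, f i - g i⟫ := Finset.sum_le_sum hB
  have h2 : ⟪ℓ, x - v⟫ = ∑ i ∈ S, ⟪ℓ, f i - g i⟫ := by
    rw [hxv, inner_sum]
  have h3 : -(δ * ‖x - v‖) ≤ ⟪ℓ' - ℓ, x - v⟫ := by
    have := abs_real_inner_le_norm (ℓ' - ℓ) (x - v)
    have hmul : ‖ℓ' - ℓ‖ * ‖x - v‖ ≤ δ * ‖x - v‖ :=
      mul_le_mul_of_nonneg_right hℓ'.le (norm_nonneg _)
    have := neg_abs_le ⟪ℓ' - ℓ, x - v⟫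
    nlinarith [abs_real_inner_le_norm (ℓ' - ℓ) (x - v), neg_abs_le ⟪ℓ' - ℓ, x - v⟫]
  have h4 : 0 ≤ ⟪ℓ', x - v⟫ := by
    have h5 : ⟪ℓ', x - v⟫ = ⟪ℓ, x - v⟫ + ⟪ℓ' - ℓ, x - v⟫ := by
      rw [← inner_add_left]; norm_num
    rw [h5, h2]; linarith
  rw [inner_sub_right] at h4; linarith

lemma dual_coercive {C : Set (Euc n)} {ℓ₀ : Euc n} {δ : ℝ} (hδ : 0 < δ)
    (hball : ∀ ℓ' : Euc n, ‖ℓ' - ℓ₀‖ < δ → ℓ' ∈ C) :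
    ∀ d ∈ dualCone C, δ / 2 * ‖d‖ ≤ ⟪ℓ₀, d⟫ := by
  intro d hd
  rcases eq_or_ne d 0 with rfl | hd0
  · simp
  · set w : Euc n := ℓ₀ - (δ / 2) • (‖d‖⁻¹ • d) with hw
    have hdn : ‖d‖ ≠ 0 := norm_ne_zero_iff.mpr hd0
    have hwball : ‖w - ℓ₀‖ < δ := by
      have h1 : w - ℓ₀ = -((δ / 2) • (‖d‖⁻¹ • d)) := by rw [hw]; abel
      rw [h1, norm_neg, norm_smul, norm_smul, norm_inv, norm_norm, Real.norm_eq_abs,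
        abs_of_pos (show (0:ℝ) < δ / 2 by linarith), inv_mul_cancel₀ hdn, mul_one]
      linarith
    have hin := hd w (hball w hwball)
    rw [hw, inner_sub_left, real_inner_smul_left, real_inner_smul_left,
      real_inner_self_eq_norm_mul_norm] at hin
    have he : ‖d‖⁻¹ * (‖d‖ * ‖d‖) = ‖d‖ := by field_simp
    rw [he] at hin
    linarith

lemma isVertex_locPart_of {Phat M : Set (Euc n)} {v γ ℓ₀ : Euc n} {δ : ℝ} (hδ : 0 < δ)
    (hball : ∀ ℓ' : Euc n, ‖ℓ' - ℓ₀‖ < δ → ℓ' ∈ normalCone M v)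
    (hγ : IsVertex Phat γ) (hmin : ℓ₀ ∈ normalCone Phat γ) :
    IsVertex (locPart Phat M v) γ := by
  obtain ⟨hγP, ℓ₁, hℓ₁⟩ := hγ
  set ε : ℝ := (δ / 2) / (‖ℓ₁‖ + 1) with hε
  have hεpos : 0 < ε := by
    apply div_pos (by linarith) (by positivity)
  have hE : ε * ‖ℓ₁‖ < δ / 2 := by
    rw [hε, div_mul_eq_mul_div, div_lt_iff₀ (by positivity)]
    nlinarith [norm_nonneg ℓ₁]
  refine ⟨mem_locPart_of_mem hγP, ℓ₀ + ε • ℓ₁, ?_⟩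
  intro x hx
  obtain ⟨p, hp, d, hd, rfl⟩ := Set.mem_add.mp hx
  have hC := dual_coercive hδ hball d hd
  have hA : ⟪ℓ₀, γ⟫ ≤ ⟪ℓ₀, p⟫ := hmin p hp
  have hB : ⟪ℓ₁, γ⟫ ≤ ⟪ℓ₁, p⟫ := (hℓ₁ p hp).1
  have hD : |⟪ℓ₁, d⟫| ≤ ‖ℓ₁‖ * ‖d‖ := abs_real_inner_le_norm ℓ₁ d
  have h5 : -(‖ℓ₁‖ * ‖d‖) ≤ ⟪ℓ₁, d⟫ := (abs_le.mp hD).1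
  have hF : ε * -(‖ℓ₁‖ * ‖d‖) ≤ ε * ⟪ℓ₁, d⟫ := mul_le_mul_of_nonneg_left h5 hεpos.le
  have hG : ε * ‖ℓ₁‖ * ‖d‖ ≤ δ / 2 * ‖d‖ := mul_le_mul_of_nonneg_right hE.le (norm_nonneg d)
  have hK : 0 ≤ ε * (⟪ℓ₁, p⟫ - ⟪ℓ₁, γ⟫) := mul_nonneg hεpos.le (by linarith)
  constructor
  · simp only [inner_add_left, inner_add_right, real_inner_smul_left]
    nlinarith [norm_nonneg d]
  · intro heq
    simp only [inner_add_left, inner_add_right, real_inner_smul_left] at heq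
    have hdn : ‖d‖ ≤ 0 := by nlinarith [norm_nonneg d]
    have hd0 : d = 0 := norm_le_zero_iff.mp hdn
    subst hd0
    simp only [inner_zero_right, mul_zero, add_zero] at heq
    have h6 : ε * (⟪ℓ₁, p⟫ - ⟪ℓ₁, γ⟫) ≤ 0 := by linarith
    have h7 : ⟪ℓ₁, p⟫ - ⟪ℓ₁, γ⟫ ≤ 0 := by
      by_contra hcon
      push_neg at hcon
      have := mul_pos hεpos hcon
      linarith
    have hp1 : ⟪ℓ₁, p⟫ = ⟪ℓ₁, γ⟫ := by linarith
    rw [add_zero]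
    exact (hℓ₁ p hp).2 hp1

lemma dual_add_idem (C : Set (Euc n)) : dualCone C + dualCone C = dualCone C := by
  apply subset_antisymm
  · intro x hx
    obtain ⟨a, ha, b, hb, rfl⟩ := Set.mem_add.mp hx
    exact add_mem_dualCone ha hb
  · intro x hx
    exact Set.mem_add.mpr ⟨x, hx, 0, zero_mem_dualCone _, add_zero x⟩

lemma subset_locPart (P M : Set (Euc n)) (v : Euc n) : P ⊆ locPart P M v :=
  fun _ hp => mem_locPart_of_mem hp

lemma mpow_mono {P P' : Set (Euc n)} (h : P ⊆ P') : ∀ k, mpow P k ⊆ mpow P' k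
  | 0 => by simp only [mpow]; exact subset_rfl
  | (k + 1) => by
      simp only [mpow]
      exact Set.add_subset_add h (mpow_mono h k)

lemma mpow_locPart (P M : Set (Euc n)) (v : Euc n) :
    ∀ k, mpow (locPart P M v) (k + 1)
      = mpow P (k + 1) + dualCone (normalCone M v)
  | 0 => by
      show locPart P M v + mpow (locPart P M v) 0 = P + mpow P 0 + _
      simp only [mpow]
      rw [Set.singleton_zero, add_zero, add_zero]
      rfl
  | (k + 1) => by
      have ih := mpow_locPart P M v k
      show locPart P M v + mpow (locPart P M v) (k + 1)
        = (P + mpow P (k + 1)) + dualCone (normalCone M v)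
      rw [ih]
      show P + dualCone (normalCone M v) + (mpow P (k + 1) + dualCone (normalCone M v)) = _
      rw [add_add_add_comm, dual_add_idem]

lemma mpow_locPart_subset (P M : Set (Euc n)) (v : Euc n) (k : ℕ) :
    mpow (locPart P M v) k ⊆ mpow P k + dualCone (normalCone M v) := by
  cases k with
  | zero =>
      intro x hx
      exact Set.mem_add.mpr ⟨x, hx, 0, zero_mem_dualCone _, add_zero x⟩
  | succ k => rw [mpow_locPart]

lemma summand_locPart_subset (Q : Set (Euc n)) (P M : Set (Euc n)) (v : Euc n) (k : ℕ) :
    Q + mpow (locPart P M v) k ⊆ (Q + mpow P k) + dualCone (normalCone M v) := by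
  intro x hx
  obtain ⟨q, hq, m, hm, rfl⟩ := Set.mem_add.mp hx
  obtain ⟨m', hm', d, hd, rfl⟩ := Set.mem_add.mp (mpow_locPart_subset P M v k hm)
  exact Set.mem_add.mpr ⟨q + m', Set.add_mem_add hq hm', d, hd, by abel⟩

lemma summand_locPart_absorb (Q : Set (Euc n)) (P M : Set (Euc n)) (v : Euc n) (k : ℕ)
    {x d : Euc n} (hx : x ∈ Q + mpow (locPart P M v) (k + 1))
    (hd : d ∈ dualCone (normalCone M v)) :
    x + d ∈ Q + mpow (locPart P M v) (k + 1) := by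
  obtain ⟨q, hq, m, hm, rfl⟩ := Set.mem_add.mp hx
  rw [mpow_locPart] at hm ⊢
  obtain ⟨m', hm', d', hd', rfl⟩ := Set.mem_add.mp hm
  refine Set.mem_add.mpr ⟨q, hq, m' + (d' + d), ?_, by abel⟩
  exact Set.mem_add.mpr ⟨m', hm', d' + d, add_mem_dualCone hd' hd, rfl⟩

lemma convex_dualCone (C : Set (Euc n)) : Convex ℝ (dualCone C) := by
  intro x hx y hy a b ha hb _
  exact add_mem_dualCone (smul_mem_dualCone hx ha) (smul_mem_dualCone hy hb)

open Filter Topology in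
lemma isRoot_locPart {S : Finset ℕ} {Q : ℕ → Set (Euc n)} {Phat M : Set (Euc n)} {v : Euc n}
    (hroot : IsRoot S Q Phat) : IsRoot S Q (locPart Phat M v) := by
  classical
  intro w hw
  obtain ⟨hwmem, ℓ, hℓ⟩ := hw
  set E' : Set (Euc n) := polyEval S Q (locPart Phat M v) with hE'
  set E : Set (Euc n) := polyEval S Q Phat with hEdef
  have hE'c : IsClosed E' := by rw [hE']; unfold polyEval; exact isClosed_closure
  have hE'conv : Convex ℝ E' := by
    rw [hE']; unfold polyEval; exact (convex_convexHull ℝ _).closure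
  have hsubUA : ∀ i ∈ S, Q i + mpow Phat i ⊆ E := by
    rw [hEdef]; unfold polyEval
    exact fun i hi x hx =>
      subset_closure (subset_convexHull ℝ _ (Set.mem_iUnion₂.mpr ⟨i, hi, hx⟩))
  have hsubUB : ∀ i ∈ S, Q i + mpow (locPart Phat M v) i ⊆ E' := by
    rw [hE']; unfold polyEval
    exact fun i hi x hx =>
      subset_closure (subset_convexHull ℝ _ (Set.mem_iUnion₂.mpr ⟨i, hi, hx⟩))
  have hEE' : E ⊆ E' := by
    rw [hEdef, hE']
    exact closure_mono (convexHull_mono (Set.iUnion₂_mono fun i hi =>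
      Set.add_subset_add subset_rfl (mpow_mono (subset_locPart Phat M v) i)))
  have hm : ∀ z ∈ E', ⟪ℓ, w⟫ ≤ ⟪ℓ, z⟫ := fun z hz => (hℓ z hz).1
  by_cases hcase : ∃ i ∈ S, i ≠ 0 ∧ (Q i + mpow (locPart Phat M v) i).Nonempty
  · obtain ⟨i₀, hi₀S, hi₀ne, x₀, hx₀⟩ := hcase
    obtain ⟨k₀, rfl⟩ : ∃ k, i₀ = k + 1 := ⟨i₀ - 1, (Nat.succ_pred_eq_of_ne_zero hi₀ne).symm⟩
    have hℓD : ∀ d ∈ dualCone (normalCone M v), 0 ≤ ⟪ℓ, d⟫ := by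
      intro d hd
      by_contra hneg
      push_neg at hneg
      set t : ℝ := (⟪ℓ, x₀⟫ - ⟪ℓ, w⟫ + 1) / (-⟪ℓ, d⟫) with ht
      have hx₀E' : x₀ ∈ E' := hsubUB _ hi₀S hx₀
      have hnum : 0 < ⟪ℓ, x₀⟫ - ⟪ℓ, w⟫ + 1 := by have := hm x₀ hx₀E'; linarith
      have htpos : 0 < t := div_pos hnum (by linarith)
      have hmem2 : x₀ + t • d ∈ E' :=
        hsubUB _ hi₀S (summand_locPart_absorb _ _ _ _ k₀ hx₀ (smul_mem_dualCone hd htpos.le))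
      have h2 := hm _ hmem2
      rw [inner_add_right, real_inner_smul_right] at h2
      have h4 : t * -⟪ℓ, d⟫ = ⟪ℓ, x₀⟫ - ⟪ℓ, w⟫ + 1 := div_mul_cancel₀ _ (by linarith)
      have h5 : t * ⟪ℓ, d⟫ = -(⟪ℓ, x₀⟫ - ⟪ℓ, w⟫ + 1) := by rw [← h4]; ring
      rw [h5] at h2; linarith
    -- w ∈ E
    have hwE : w ∈ E := by
      have hsub2 : E' ⊆ closure (convexHull ℝ (⋃ i ∈ S, Q i + mpow Phat i)
          + dualCone (normalCone M v)) := by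
        rw [hE']; unfold polyEval
        apply closure_mono
        have h1 : (⋃ i ∈ S, Q i + mpow (locPart Phat M v) i)
            ⊆ convexHull ℝ (⋃ i ∈ S, Q i + mpow Phat i) + dualCone (normalCone M v) := by
          intro x hx
          rw [Set.mem_iUnion₂] at hx
          obtain ⟨i, hiS, hxi⟩ := hx
          have h2 := summand_locPart_subset (Q i) Phat M v i hxi
          exact Set.add_subset_add ((Set.subset_iUnion₂ i hiS).trans (subset_convexHull ℝ _))
            subset_rfl h2
        exact convexHull_min h1 ((convex_convexHull ℝ _).add (convex_dualCone _))
      obtain ⟨y, hy_mem, hy_tend⟩ := mem_closure_iff_seq_limit.mp (hsub2 hwmem)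
      choose p hp d hd hpd using fun k => Set.mem_add.mp (hy_mem k)
      have hpE' : ∀ k, p k ∈ E' := fun k => hEE' (subset_closure (hp k))
      by_cases hbd : ∀ R : ℝ, ∀ᶠ k in atTop, R < ‖p k‖
      · exfalso
        have htends : Tendsto (fun k => ‖p k‖) atTop atTop :=
          tendsto_atTop.mpr fun b => (hbd b).mono fun k hk => hk.le
        obtain ⟨K, hK⟩ := eventually_atTop.mp (hbd 1)
        set q : ℕ → Euc n := fun k => p (k + K) with hq
        have hq1 : ∀ k, 1 ≤ ‖q k‖ := fun k => (hK (k + K) (Nat.le_add_left K k)).le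
        have hqne : ∀ k, ‖q k‖ ≠ 0 := fun k => by
          have := hq1 k; intro h; rw [h] at this; linarith
        set u : ℕ → Euc n := fun k => ‖q k‖⁻¹ • q k with hu
        have husph : ∀ k, u k ∈ Metric.sphere (0 : Euc n) 1 := by
          intro k
          rw [mem_sphere_zero_iff_norm, hu]; dsimp only
          rw [norm_smul, norm_inv, norm_norm]
          exact inv_mul_cancel₀ (hqne k)
        obtain ⟨z, hzs, φ, hφ, hconv⟩ := (isCompact_sphere (0 : Euc n) 1).tendsto_subseq husph
        have hqE' : ∀ k, q k ∈ E' := fun k => hpE' (k + K)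
        have hqnorm : Tendsto (fun k => ‖q (φ k)‖) atTop atTop := by
          have h1 : Tendsto (fun k : ℕ => k + K) atTop atTop := tendsto_add_atTop_nat K
          exact (htends.comp h1).comp hφ.tendsto_atTop
        have hstend : Tendsto (fun k => ‖q (φ k)‖⁻¹) atTop (𝓝 (0 : ℝ)) :=
          tendsto_inv_atTop_zero.comp hqnorm
        have hcmem : ∀ k, (1 - ‖q (φ k)‖⁻¹) • w + ‖q (φ k)‖⁻¹ • q (φ k) ∈ E' := by
          intro k
          refine hE'conv hwmem (hqE' (φ k)) ?_ (inv_nonneg.mpr (norm_nonneg _)) (by ring)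
          have h1 : ‖q (φ k)‖⁻¹ ≤ 1 := inv_le_one_of_one_le₀ (hq1 (φ k))
          linarith
        have hlimc : Tendsto (fun k => (1 - ‖q (φ k)‖⁻¹) • w + ‖q (φ k)‖⁻¹ • q (φ k))
            atTop (𝓝 (w + z)) := by
          have he : ∀ k, (1 - ‖q (φ k)‖⁻¹) • w + ‖q (φ k)‖⁻¹ • q (φ k)
              = w + (u (φ k) - ‖q (φ k)‖⁻¹ • w) := by
            intro k
            rw [hu]; dsimp only
            rw [sub_smul, one_smul]; abel
          simp only [he]
          have h2 : Tendsto (fun k => ‖q (φ k)‖⁻¹ • w) atTop (𝓝 (0 : Euc n)) := by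
            have := hstend.smul_const w
            rwa [zero_smul] at this
          have h3 : Tendsto (fun k => u (φ k) - ‖q (φ k)‖⁻¹ • w) atTop (𝓝 (z - 0)) :=
            hconv.sub h2
          rw [sub_zero] at h3
          exact tendsto_const_nhds.add h3
        have hwz : w + z ∈ E' := hE'c.mem_of_tendsto hlimc (Eventually.of_forall hcmem)
        have hz0 : 0 ≤ ⟪ℓ, z⟫ := by
          have := hm _ hwz; rw [inner_add_right] at this; linarith
        have hzpos : 0 < ⟪ℓ, z⟫ := by
          rcases eq_or_lt_of_le hz0 with he | h
          · exfalso
            have h1 : ⟪ℓ, w + z⟫ = ⟪ℓ, w⟫ := by rw [inner_add_right, ← he]; ring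
            have h2 := (hℓ _ hwz).2 h1
            have h3 : z = 0 := add_eq_left.mp h2
            have h4 := mem_sphere_zero_iff_norm.mp hzs
            rw [h3, norm_zero] at h4; norm_num at h4
          · exact h
        have hyt : Tendsto (fun k => ⟪ℓ, y k⟫) atTop (𝓝 ⟪ℓ, w⟫) :=
          Tendsto.inner tendsto_const_nhds hy_tend
        have hyb : ∀ᶠ k in atTop, ⟪ℓ, y k⟫ < ⟪ℓ, w⟫ + 1 :=
          hyt.eventually (gt_mem_nhds (lt_add_one _))
        have hpb : ∀ᶠ k in atTop, ⟪ℓ, p k⟫ < ⟪ℓ, w⟫ + 1 := hyb.mono (fun k hk => by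
          have h1 := hℓD (d k) (hd k)
          have h2 : ⟪ℓ, y k⟫ = ⟪ℓ, p k⟫ + ⟪ℓ, d k⟫ := by rw [← hpd k, inner_add_right]
          linarith)
        have hcomp : Tendsto (fun k => φ k + K) atTop atTop :=
          (tendsto_add_atTop_nat K).comp hφ.tendsto_atTop
        have hpb2 : ∀ᶠ k in atTop, ⟪ℓ, q (φ k)⟫ < ⟪ℓ, w⟫ + 1 := hcomp.eventually hpb
        have hut : Tendsto (fun k => ⟪ℓ, u (φ k)⟫) atTop (𝓝 ⟪ℓ, z⟫) :=
          Tendsto.inner tendsto_const_nhds hconv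
        have hub : ∀ᶠ k in atTop, ⟪ℓ, z⟫ / 2 < ⟪ℓ, u (φ k)⟫ :=
          hut.eventually (lt_mem_nhds (by linarith))
        have hnb : ∀ᶠ k in atTop,
            2 * (|⟪ℓ, w⟫ + 1| + 1) / ⟪ℓ, z⟫ ≤ ‖q (φ k)‖ := hqnorm.eventually_ge_atTop _
        obtain ⟨k, hk1, hk2, hk3⟩ := (hpb2.and (hub.and hnb)).exists
        have hqu : ⟪ℓ, q (φ k)⟫ = ‖q (φ k)‖ * ⟪ℓ, u (φ k)⟫ := by
          rw [hu]; dsimp only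
          rw [real_inner_smul_right, ← mul_assoc, mul_inv_cancel₀ (hqne (φ k)), one_mul]
        have h6 : 2 * (|⟪ℓ, w⟫ + 1| + 1) / ⟪ℓ, z⟫ * (⟪ℓ, z⟫ / 2)
            ≤ ‖q (φ k)‖ * ⟪ℓ, u (φ k)⟫ :=
          mul_le_mul hk3 hk2.le (by linarith) (norm_nonneg _)
        have hcne : ⟪ℓ, z⟫ ≠ 0 := ne_of_gt hzpos
        have h7 : 2 * (|⟪ℓ, w⟫ + 1| + 1) / ⟪ℓ, z⟫ * (⟪ℓ, z⟫ / 2)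
            = (|⟪ℓ, w⟫ + 1| + 1) * (⟪ℓ, z⟫ / ⟪ℓ, z⟫) := by ring
        rw [div_self hcne, mul_one] at h7
        have h8 := le_abs_self (⟪ℓ, w⟫ + 1)
        rw [h7] at h6
        linarith
      · push_neg at hbd
        obtain ⟨R, hR⟩ := hbd
        obtain ⟨φ, hφ, hφR⟩ := Filter.extraction_of_frequently_atTop hR
        obtain ⟨pl, _, ψ, hψ, htend⟩ := (isCompact_closedBall (0 : Euc n) R).tendsto_subseq
          (x := fun k => p (φ k)) (fun k => mem_closedBall_zero_iff.mpr (hφR k))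
        have hy2 : Tendsto (fun k => y (φ (ψ k))) atTop (𝓝 w) :=
          hy_tend.comp ((hφ.comp hψ).tendsto_atTop)
        have hp2 : Tendsto (fun k => p (φ (ψ k))) atTop (𝓝 pl) := htend
        have hd2 : Tendsto (fun k => d (φ (ψ k))) atTop (𝓝 (w - pl)) := by
          have he : (fun k => d (φ (ψ k))) = fun k => y (φ (ψ k)) - p (φ (ψ k)) :=
            funext fun k => by rw [← hpd (φ (ψ k))]; abel
          rw [he]
          exact hy2.sub hp2
        have hwpl : w - pl ∈ dualCone (normalCone M v) :=
          (isClosed_dualCone _).mem_of_tendsto hd2 (Eventually.of_forall fun k => hd _)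
        have hplE : pl ∈ E := by
          have h1 : pl ∈ closure (convexHull ℝ (⋃ i ∈ S, Q i + mpow Phat i)) :=
            mem_closure_of_tendsto hp2 (Eventually.of_forall fun k => hp _)
          rw [hEdef]; unfold polyEval; exact h1
        have h1 := hm pl (hEE' hplE)
        have h2 : 0 ≤ ⟪ℓ, w - pl⟫ := hℓD _ hwpl
        rw [inner_sub_right] at h2
        have h3 : ⟪ℓ, pl⟫ = ⟪ℓ, w⟫ := by linarith
        have h4 := (hℓ pl (hEE' hplE)).2 h3
        rw [← h4]; exact hplE
    have hvert : IsVertex E w := ⟨hwE, ℓ, fun x hx => hℓ x (hEE' hx)⟩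
    obtain ⟨i, hi, j, hj, hij, hvi, hvj⟩ := hroot w hvert
    have key : ∀ m ∈ S, IsVertex (Q m + mpow Phat m) w →
        IsVertex (Q m + mpow (locPart Phat M v) m) w := by
      intro m hmS hvm
      obtain ⟨hwm, _⟩ := hvm
      have hwB : w ∈ Q m + mpow (locPart Phat M v) m :=
        Set.add_subset_add subset_rfl (mpow_mono (subset_locPart Phat M v) m) hwm
      refine ⟨hwB, ℓ, fun x hx => ?_⟩
      have hxE' : x ∈ E' := hsubUB m hmS hx
      constructor
      · obtain ⟨a, haA, dd, hdd, rfl⟩ := Set.mem_add.mp (summand_locPart_subset (Q m) Phat M v m hx)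
        have h1 := hm _ (hEE' (hsubUA m hmS haA))
        have h2 := hℓD dd hdd
        rw [inner_add_right]; linarith
      · intro he; exact (hℓ _ hxE').2 he
    exact ⟨i, hi, j, hj, hij, key i hi hvi, key j hj hvj⟩
  · push_neg at hcase
    have hBA : ∀ i ∈ S, Q i + mpow (locPart Phat M v) i = Q i + mpow Phat i := by
      intro i hi
      rcases eq_or_ne i 0 with rfl | hne
      · rfl
      · have hBempty := hcase i hi hne
        have hAsub : Q i + mpow Phat i ⊆ Q i + mpow (locPart Phat M v) i :=
          Set.add_subset_add subset_rfl (mpow_mono (subset_locPart Phat M v) i)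
        rw [hBempty] at hAsub ⊢
        exact (Set.subset_empty_iff.mp hAsub).symm
    have hEeq : E' = E := by
      rw [hE', hEdef]; unfold polyEval
      exact congrArg _ (congrArg _ (Set.iUnion₂_congr hBA))
    have hvert : IsVertex E w := by rw [← hEeq]; exact ⟨hwmem, ℓ, hℓ⟩
    obtain ⟨i, hi, j, hj, hij, hvi, hvj⟩ := hroot w hvert
    refine ⟨i, hi, j, hj, hij, ?_, ?_⟩
    · rw [hBA i hi]; exact hvi
    · rw [hBA j hj]; exact hvj

lemma suppFan_locPart {Phat M : Set (Euc n)} {v γ₀ ℓ₀ : Euc n} {δ : ℝ} (hδ : 0 < δ)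
    (hball : ∀ ℓ' : Euc n, ‖ℓ' - ℓ₀‖ < δ → ℓ' ∈ normalCone M v)
    (hγ₀ : IsVertex Phat γ₀) (hsub : normalCone M v ⊆ normalCone Phat γ₀) :
    SuppFan (locPart Phat M v) = normalCone M v := by
  have hne : Phat.Nonempty := ⟨γ₀, hγ₀.1⟩
  apply subset_antisymm
  · intro ℓ hℓ
    obtain ⟨β, hβ, hmem⟩ := Set.mem_iUnion₂.mp hℓ
    rw [normalCone_locPart hne] at hmem
    exact hmem.2
  · intro ℓ hℓC
    have hℓ₀C : ℓ₀ ∈ normalCone M v := hball ℓ₀ (by simpa using hδ)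
    have hγvert : IsVertex (locPart Phat M v) γ₀ :=
      isVertex_locPart_of hδ hball hγ₀ (hsub hℓ₀C)
    apply Set.mem_biUnion (show γ₀ ∈ {x | IsVertex (locPart Phat M v) x} from hγvert)
    rw [normalCone_locPart hne]
    exact ⟨hsub hℓC, hℓC⟩

lemma vertex_mem_extremePoints {X : Set (Euc n)} {γ : Euc n}
    (h : IsVertex (convexHull ℝ X) γ) : γ ∈ (convexHull ℝ X).extremePoints ℝ := by
  obtain ⟨hγ, ℓ, hℓ⟩ := h
  refine mem_extremePoints.mpr ⟨hγ, ?_⟩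
  intro x hx y hy hseg
  obtain ⟨a, b, ha, hb, hab, habγ⟩ := hseg
  have h1 := (hℓ x hx).1
  have h2 := (hℓ y hy).1
  have hγeq : ⟪ℓ, γ⟫ = a * ⟪ℓ, x⟫ + b * ⟪ℓ, y⟫ := by
    rw [← habγ, inner_add_right, real_inner_smul_right, real_inner_smul_right]
  have h3 : a * ⟪ℓ, γ⟫ + b * ⟪ℓ, γ⟫ = ⟪ℓ, γ⟫ := by rw [← add_mul, hab, one_mul]
  have hx2 : ⟪ℓ, x⟫ = ⟪ℓ, γ⟫ := by
    by_contra hne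
    have hlt : ⟪ℓ, γ⟫ < ⟪ℓ, x⟫ := lt_of_le_of_ne h1 (Ne.symm hne)
    have A1 := mul_lt_mul_of_pos_left hlt ha
    have A2 := mul_le_mul_of_nonneg_left h2 hb.le
    linarith
  have hy2 : ⟪ℓ, y⟫ = ⟪ℓ, γ⟫ := by
    by_contra hne
    have hlt : ⟪ℓ, γ⟫ < ⟪ℓ, y⟫ := lt_of_le_of_ne h2 (Ne.symm hne)
    have A1 := mul_lt_mul_of_pos_left hlt hb
    have A2 := mul_le_mul_of_nonneg_left h1 ha.le
    linarith
  exact ⟨(hℓ x hx).2 hx2, (hℓ y hy).2 hy2⟩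

end Stmt13
open Stmt13 in
/-- global-to-local direction of the local-global principle. -/
theorem stmt_13 {n : ℕ} (ω : Fin n → ℝ) (hω : LinearIndependent ℚ (fun i => ω i))
    (S : Finset ℕ) (Q : ℕ → Set (Euc n))
    (hQ : ∀ i ∈ S, IsRatPolyhedron (Q i) ∧ OmegaPositive ω (Q i))
    (M : Set (Euc n)) (hM : M = ∑ i ∈ S, Q i)
    (Phat : Set (Euc n)) (hpoly : IsRatPolyhedron Phat) (hpos : OmegaPositive ω Phat)
    (hglob : IsGlobalSolution S Q M Phat) :
    (∀ v, IsVertex M v → IsCompleteLocalSolution S Q M v (locPart Phat M v)) ∧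
    (∀ v, IsVertex M v → ∀ γ, IsVertex (locPart Phat M v) γ →
      IsVertex Phat γ ∧
        normalCone (locPart Phat M v) γ = normalCone Phat γ ∩ normalCone M v) ∧
    (∀ v, IsVertex M v → ∀ γ,
      IsVertex (convexHull ℝ
        (⋃ u ∈ {x | IsVertex M x}, {y | IsVertex (locPart Phat M u) y})) γ →
      (interior (normalCone M v ∩
        normalCone (convexHull ℝ
          (⋃ u ∈ {x | IsVertex M x}, {y | IsVertex (locPart Phat M u) y})) γ)).Nonempty →
      IsVertex (locPart Phat M v) γ) := by
  obtain ⟨hroot, hglob2⟩ := hglob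
  have main2 : ∀ v, IsVertex M v → ∀ γ, IsVertex (locPart Phat M v) γ →
      IsVertex Phat γ ∧
        normalCone (locPart Phat M v) γ = normalCone Phat γ ∩ normalCone M v := by
    intro v hv γ hγ
    obtain ⟨γ₀, hγ₀, hsub⟩ := hglob2 v hv
    exact ⟨isVertex_of_isVertex_locPart hγ, normalCone_locPart ⟨γ₀, hγ₀.1⟩ γ⟩
  have main1 : ∀ v, IsVertex M v → IsCompleteLocalSolution S Q M v (locPart Phat M v) := by
    intro v hv
    obtain ⟨γ₀, hγ₀, hsub⟩ := hglob2 v hv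
    obtain ⟨ℓ₀, δ, hδ, hball⟩ := exists_ball_normalCone (fun i hi => (hQ i hi).1) hM hv
    exact ⟨isRoot_locPart hroot, suppFan_locPart hδ hball hγ₀ hsub⟩
  refine ⟨main1, main2, ?_⟩
  intro v hv γ hγvert hint
  have hγX : γ ∈ ⋃ u ∈ {x | IsVertex M x}, {y | IsVertex (locPart Phat M u) y} :=
    extremePoints_convexHull_subset (vertex_mem_extremePoints hγvert)
  obtain ⟨u, hu, hγu⟩ := Set.mem_iUnion₂.mp hγX
  have hγPhat : IsVertex Phat γ := isVertex_of_isVertex_locPart hγu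
  obtain ⟨ℓ, hℓint⟩ := hint
  obtain ⟨ε, hε, hb⟩ := Metric.isOpen_iff.mp isOpen_interior ℓ hℓint
  have hsubint := hb.trans interior_subset
  have hℓ2 := interior_subset hℓint
  have hsupp := (main1 v hv).2
  have hℓS : ℓ ∈ SuppFan (locPart Phat M v) := by rw [hsupp]; exact hℓ2.1
  obtain ⟨β, hβvert, hβcone⟩ := Set.mem_iUnion₂.mp hℓS
  have hβfacts := main2 v hv β hβvert
  have hℓNβ : ℓ ∈ normalCone Phat β := by
    rw [hβfacts.2] at hβcone; exact hβcone.1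
  have hβP₀ : β ∈ convexHull ℝ
      (⋃ u ∈ {x | IsVertex M x}, {y | IsVertex (locPart Phat M u) y}) :=
    subset_convexHull ℝ _ (Set.mem_iUnion₂.mpr ⟨v, hv, hβvert⟩)
  have h1 : ⟪ℓ, γ⟫ ≤ ⟪ℓ, β⟫ := hℓ2.2 β hβP₀
  have h2 : ⟪ℓ, β⟫ ≤ ⟪ℓ, γ⟫ := hℓNβ γ hγPhat.1
  have hγβ : γ = β := by
    by_contra hne
    have he : γ - β ≠ 0 := sub_ne_zero.mpr hne
    have hen : 0 < ‖γ - β‖ := norm_pos_iff.mpr he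
    set ℓ' : Euc n := ℓ + (ε / 2) • (‖γ - β‖⁻¹ • (γ - β)) with hℓ'
    have hℓ'b : ℓ' ∈ Metric.ball ℓ ε := by
      rw [Metric.mem_ball, dist_eq_norm, hℓ', add_sub_cancel_left, norm_smul, norm_smul,
        norm_inv, norm_norm, Real.norm_eq_abs, abs_of_pos (show (0:ℝ) < ε / 2 by linarith),
        inv_mul_cancel₀ (ne_of_gt hen), mul_one]
      linarith
    have hℓ'N := (hsubint hℓ'b).2
    have h3 : ⟪ℓ', γ⟫ ≤ ⟪ℓ', β⟫ := hℓ'N β hβP₀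
    rw [hℓ'] at h3
    simp only [inner_add_left, real_inner_smul_left] at h3
    have h4 : ⟪γ - β, γ⟫ - ⟪γ - β, β⟫ = ‖γ - β‖ * ‖γ - β‖ := by
      rw [← inner_sub_right, real_inner_self_eq_norm_mul_norm]
    have h5 : ‖γ - β‖⁻¹ * ⟪γ - β, γ⟫ - ‖γ - β‖⁻¹ * ⟪γ - β, β⟫ = ‖γ - β‖ := by
      rw [← mul_sub, h4, ← mul_assoc, inv_mul_cancel₀ (ne_of_gt hen), one_mul]
    have h6 : 0 < ε / 2 * ‖γ - β‖ := mul_pos (by linarith) hen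
    nlinarith
  rw [hγβ]; exact hβvert
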